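/- Let F be a complete Noetherian local Λ-algebra, 𝓕 = Hom_Λ(F,−), and Γ ⊆ Aut_Λ(F). Suppose Γ acts nontrivially on the tangent space TF = Hom_k(m_F/(m_F² + m_Λ F), k). Then the quotient functor 𝓓 = 𝓕/Γ fails to have a tangent space: writing V = 𝓕(k[ε]) (with ε² = 0) and k[ε₁,ε₂] = k[t₁,t₂]/(t₁²,t₂²,t₁t₂), the natural map 𝓓(k[ε₁,ε₂]) → 𝓓(k[ε]) × 𝓓(k[ε]) is not injective. In particular 𝓓 does not have a hull. -/

import Mathlib

open IsLocalRing

universe u v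

/-- An object of the category `Art` of Artinian local `Λ`-algebras with residue field
`k = Λ/m_Λ` (the augmentation is encoded by `resSurj`: every element is congruent to a
constant modulo the maximal ideal, so that `A/m_A ≅ k` canonically). -/
structure ArtAlg (Λ : Type u) [CommRing Λ] [IsLocalRing Λ] : Type (u + 1) where
  carrier : Type u
  [cring : CommRing carrier]
  [alg : Algebra Λ carrier]
  [art : IsArtinianRing carrier]
  [loc : IsLocalRing carrier]
  [locHom : IsLocalHom (algebraMap Λ carrier)]
  resSurj : ∀ a : carrier, ∃ c : Λ, a - algebraMap Λ carrier c ∈ maximalIdeal carrier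

attribute [instance] ArtAlg.cring ArtAlg.alg ArtAlg.art ArtAlg.loc ArtAlg.locHom

variable {Λ : Type u} [CommRing Λ] [IsLocalRing Λ]

/-- Morphisms in `Art`: local `Λ`-algebra homomorphisms (compatibility with the
augmentations is then automatic). -/
structure ArtHom (A B : ArtAlg Λ) where
  toAlgHom : A.carrier →ₐ[Λ] B.carrier
  isLocal : IsLocalHom toAlgHom.toRingHom

def ArtHom.id (A : ArtAlg Λ) : ArtHom A A :=
  ⟨AlgHom.id Λ A.carrier, ⟨fun _ h => h⟩⟩

def ArtHom.comp {A B C : ArtAlg Λ} (g : ArtHom B C) (f : ArtHom A B) : ArtHom A C :=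
  ⟨g.toAlgHom.comp f.toAlgHom, ⟨fun a h => f.isLocal.1 a (g.isLocal.1 (f.toAlgHom a) h)⟩⟩

/-- A covariant functor `Art → Sets`. -/
structure ArtFunctor (Λ : Type u) [CommRing Λ] [IsLocalRing Λ] : Type (u + 1) where
  obj : ArtAlg Λ → Type u
  map : {A B : ArtAlg Λ} → ArtHom A B → obj A → obj B
  map_id : ∀ (A : ArtAlg Λ) (x : obj A), map (ArtHom.id A) x = x
  map_comp : ∀ {A B C : ArtAlg Λ} (f : ArtHom A B) (g : ArtHom B C) (x : obj A),
    map (g.comp f) x = map g (map f x)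

/-- A natural transformation between functors `Art → Sets`. -/
structure ArtNatTrans (F G : ArtFunctor Λ) where
  app : ∀ A : ArtAlg Λ, F.obj A → G.obj A
  naturality : ∀ {A B : ArtAlg Λ} (f : ArtHom A B) (x : F.obj A),
    app B (F.map f x) = G.map f (app A x)

/-- A complete Noetherian local `Λ`-algebra with residue field `k`,
a pro-representing object. -/
structure ProRepAlg (Λ : Type u) [CommRing Λ] [IsLocalRing Λ] : Type (u + 1) where
  carrier : Type u
  [cring : CommRing carrier]
  [alg : Algebra Λ carrier]
  [noeth : IsNoetherianRing carrier]
  [loc : IsLocalRing carrier]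
  [locHom : IsLocalHom (algebraMap Λ carrier)]
  [complete : IsAdicComplete (maximalIdeal carrier) carrier]
  resSurj : ∀ a : carrier, ∃ c : Λ, a - algebraMap Λ carrier c ∈ maximalIdeal carrier

attribute [instance] ProRepAlg.cring ProRepAlg.alg ProRepAlg.noeth ProRepAlg.loc
  ProRepAlg.locHom ProRepAlg.complete

/-- Local `Λ`-algebra homomorphisms `R → S`. -/
def LocHom (Λ : Type u) [CommRing Λ] (R S : Type u) [CommRing R] [CommRing S]
    [Algebra Λ R] [Algebra Λ S] [IsLocalRing R] [IsLocalRing S] : Type u :=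
  {f : R →ₐ[Λ] S // IsLocalHom f.toRingHom}

/-- The pro-representable functor `h_F = Hom_Λ(F, -)`. -/
def hFunctor (F : ProRepAlg Λ) : ArtFunctor Λ where
  obj A := LocHom Λ F.carrier A.carrier
  map {A B} f x := ⟨f.toAlgHom.comp x.1, ⟨fun a h => x.2.1 a (f.isLocal.1 (x.1 a) h)⟩⟩
  map_id A x := Subtype.ext (AlgHom.ext fun _ => rfl)
  map_comp f g x := Subtype.ext (AlgHom.ext fun _ => rfl)

/-- An algebra automorphism of `F`, as a ring hom, is a local homomorphism. -/
theorem AlgEquiv.isLocalHom_toRingHom {F : ProRepAlg Λ} (g : F.carrier ≃ₐ[Λ] F.carrier) :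
    IsLocalHom ((g : F.carrier →ₐ[Λ] F.carrier).toRingHom) :=
  ⟨fun a h => by simpa using h.map g.symm.toAlgHom.toRingHom⟩

/-- Precomposition of an element of `h_F(A) = Hom_Λ(F, A)` with a local endomorphism
`g : F → F`; this is the value on `A` of the natural transformation `h_F → h_F`
induced by `g`. -/
def precompEnd {F : ProRepAlg Λ} {A : ArtAlg Λ} (g : LocHom Λ F.carrier F.carrier)
    (z : (hFunctor F).obj A) : (hFunctor F).obj A :=
  ⟨z.1.comp g.1, ⟨fun a h => g.2.1 a (z.2.1 (g.1 a) h)⟩⟩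

/-- Precomposition action of `Aut_Λ(F)` on `h_F(A) = Hom_Λ(F, A)`. -/
def precompAut {F : ProRepAlg Λ} {A : ArtAlg Λ} (g : F.carrier ≃ₐ[Λ] F.carrier)
    (x : (hFunctor F).obj A) : (hFunctor F).obj A :=
  ⟨x.1.comp g.toAlgHom, ⟨fun a h => (AlgEquiv.isLocalHom_toRingHom g).1 a (x.2.1 _ h)⟩⟩

/-- The orbit equivalence relation of `Γ ⊆ Aut_Λ(F)` on `h_F(A)`. -/
def orbitSetoid (F : ProRepAlg Λ) (Γ : Subgroup (F.carrier ≃ₐ[Λ] F.carrier))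
    (A : ArtAlg Λ) : Setoid ((hFunctor F).obj A) where
  r x y := ∃ g ∈ Γ, precompAut g x = y
  iseqv := by
    constructor
    · exact fun x => ⟨1, Γ.one_mem, Subtype.ext (AlgHom.ext fun a => rfl)⟩
    · rintro x y ⟨g, hg, rfl⟩
      exact ⟨g⁻¹, Γ.inv_mem hg, Subtype.ext (AlgHom.ext fun a =>
        show x.1 (g (g.symm a)) = x.1 a by rw [g.apply_symm_apply])⟩
    · rintro x y z ⟨g, hg, rfl⟩ ⟨h, hh, rfl⟩
      exact ⟨g * h, Γ.mul_mem hg hh, Subtype.ext (AlgHom.ext fun a => rfl)⟩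

/-- The quotient functor `𝓕/Γ`. -/
def quotFunctor (F : ProRepAlg Λ) (Γ : Subgroup (F.carrier ≃ₐ[Λ] F.carrier)) :
    ArtFunctor Λ where
  obj A := Quotient (orbitSetoid F Γ A)
  map {A B} f := Quotient.map ((hFunctor F).map f) (by
    rintro x y ⟨g, hg, rfl⟩
    exact ⟨g, hg, Subtype.ext (AlgHom.ext fun a => rfl)⟩)
  map_id A := by
    rintro ⟨x⟩
    exact congrArg (Quotient.mk _) ((hFunctor F).map_id A x)
  map_comp f g := by
    rintro ⟨x⟩
    exact congrArg (Quotient.mk _) ((hFunctor F).map_comp f g x)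

/-- The quotient map `q : 𝓕 → 𝓕/Γ`. -/
def quotMap (F : ProRepAlg Λ) (Γ : Subgroup (F.carrier ≃ₐ[Λ] F.carrier)) :
    ArtNatTrans (hFunctor F) (quotFunctor F Γ) where
  app A := Quotient.mk _
  naturality f x := rfl

/-- Formal smoothness of a natural transformation `q : 𝓕 → 𝓓`: for every surjection
`π : A ↠ B` in `Art`, the induced map `𝓕(A) → 𝓕(B) ×_{𝓓(B)} 𝓓(A)` is surjective. -/
def FormallySmooth' {𝓕 𝓓 : ArtFunctor Λ} (q : ArtNatTrans 𝓕 𝓓) : Prop :=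
  ∀ {A B : ArtAlg Λ} (π : ArtHom A B), Function.Surjective π.toAlgHom →
    ∀ (b : 𝓕.obj B) (d : 𝓓.obj A), q.app B b = 𝓓.map π d →
      ∃ a : 𝓕.obj A, 𝓕.map π a = b ∧ q.app A a = d

/-- `A` is of the form `k[V]` for a `k`-vector space `V`: the maximal ideal is
square-zero and `m_Λ A = 0`. -/
def IsKV (A : ArtAlg Λ) : Prop :=
  maximalIdeal A.carrier ^ 2 = ⊥ ∧
    Ideal.map (algebraMap Λ A.carrier) (maximalIdeal Λ) = ⊥

/-- `A` is (isomorphic to) `k[ε] = k[t]/t²`: it is a `k[V]` with one-dimensional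
maximal ideal. -/
def IsDualNumbers (A : ArtAlg Λ) : Prop :=
  IsKV A ∧ ∃ t : A.carrier, t ≠ 0 ∧ maximalIdeal A.carrier = Ideal.span {t}

/-- `𝓓` has a hull: a formally smooth natural transformation `h_F → 𝓓` which is
bijective on all rings `k[V]`. -/
def HasHull (𝓓 : ArtFunctor Λ) : Prop :=
  ∃ (F : ProRepAlg Λ) (α : ArtNatTrans (hFunctor F) 𝓓), FormallySmooth' α ∧
    ∀ A : ArtAlg Λ, IsKV A → Function.Bijective (α.app A)

/-- `(R, p, q)` is the fibre product `A ×_B C` of `f : A → B` and `g : C → B`. -/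
def IsFibreProduct {A B C R : ArtAlg Λ} (f : ArtHom A B) (g : ArtHom C B)
    (p : ArtHom R A) (q : ArtHom R C) : Prop :=
  (∀ r : R.carrier, f.toAlgHom (p.toAlgHom r) = g.toAlgHom (q.toAlgHom r)) ∧
    ∀ (a : A.carrier) (c : C.carrier), f.toAlgHom a = g.toAlgHom c →
      ∃! r : R.carrier, p.toAlgHom r = a ∧ q.toAlgHom r = c

/-- `g` acts trivially on the tangent space `TF = Hom_k(m_F/(m_F² + m_Λ F), k)`,
i.e. it is the identity on the cotangent space `m_F/(m_F² + m_Λ F)`. -/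
def ActsTriviallyOnTangent (F : ProRepAlg Λ) (g : F.carrier ≃ₐ[Λ] F.carrier) : Prop :=
  ∀ x ∈ maximalIdeal F.carrier,
    g x - x ∈ maximalIdeal F.carrier ^ 2 ⊔
      Ideal.map (algebraMap Λ F.carrier) (maximalIdeal Λ)

namespace NoHullAux

open IsLocalRing

variable {Λ : Type u} [CommRing Λ] [IsLocalRing Λ]

theorem locHom_maps_max {A B : Type u} [CommRing A] [CommRing B] [Algebra Λ A] [Algebra Λ B]
    [IsLocalRing A] [IsLocalRing B] (u : LocHom Λ A B) {m : A}
    (hm : m ∈ maximalIdeal A) : u.1 m ∈ maximalIdeal B := by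
  rw [mem_maximalIdeal, mem_nonunits_iff] at hm ⊢
  exact fun h => hm (u.2.1 m h)

theorem algebraMap_mem_max {A : Type u} [CommRing A] [Algebra Λ A] [IsLocalRing A]
    [IsLocalHom (algebraMap Λ A)] {c : Λ} (hc : c ∈ maximalIdeal Λ) :
    algebraMap Λ A c ∈ maximalIdeal A := by
  rw [mem_maximalIdeal, mem_nonunits_iff] at hc ⊢
  exact fun h => hc (IsLocalHom.map_nonunit c h)

theorem mem_max_of_map {A : Type u} [CommRing A] [Algebra Λ A] [IsLocalRing A] {c : Λ}
    (h : algebraMap Λ A c ∈ maximalIdeal A) : c ∈ maximalIdeal Λ := by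
  rw [mem_maximalIdeal, mem_nonunits_iff] at h ⊢
  exact fun hu => h (hu.map (algebraMap Λ A))

/-- The key construction: a local `Λ`-algebra map `v : F → E` to the dual numbers
which is moved by `g`. -/
theorem exists_tangent_vector (F : ProRepAlg Λ) (E : ArtAlg Λ) (hE : IsDualNumbers E)
    (g : F.carrier ≃ₐ[Λ] F.carrier) (hg : ¬ ActsTriviallyOnTangent F g) :
    ∃ (v : LocHom Λ F.carrier E.carrier) (x : F.carrier), v.1 (g x) ≠ v.1 x := by
  classical
  obtain ⟨⟨hm2, hmΛ⟩, t, ht0, htspan⟩ := hE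
  rw [ActsTriviallyOnTangent] at hg
  push_neg at hg
  obtain ⟨x, hxm, hxI⟩ := hg
  set I : Ideal F.carrier := maximalIdeal F.carrier ^ 2 ⊔ Ideal.map (algebraMap Λ F.carrier) (maximalIdeal Λ)
    with hIdef
  have hIle : I ≤ maximalIdeal F.carrier := by
    refine sup_le (Ideal.pow_le_self two_ne_zero) (Ideal.map_le_iff_le_comap.2 ?_)
    exact fun c hc => algebraMap_mem_max hc
  set J : Submodule Λ F.carrier := (Submodule.restrictScalars Λ I) ⊔ Submodule.span Λ {1} with hJdef
  have hIJ : ∀ a ∈ I, a ∈ J := fun a ha => Submodule.mem_sup_left ha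
  have hconstJ : ∀ c : Λ, algebraMap Λ F.carrier c ∈ J := by
    intro c
    refine Submodule.mem_sup_right ?_
    rw [Algebra.algebraMap_eq_smul_one]
    exact Submodule.smul_mem _ _ (Submodule.mem_span_singleton_self 1)
  have hgx : g x - x ∈ maximalIdeal F.carrier := by
    refine sub_mem ?_ hxm
    rw [mem_maximalIdeal, mem_nonunits_iff] at hxm ⊢
    intro h
    exact hxm (by simpa using h.map g.symm.toAlgHom.toRingHom)
  have hxJ : g x - x ∉ J := by
    intro h
    rw [hJdef, Submodule.mem_sup] at h
    obtain ⟨y, hy, z, hz, hyz⟩ := h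
    rw [Submodule.mem_span_singleton] at hz
    obtain ⟨c, rfl⟩ := hz
    have hz1 : c • (1 : F.carrier) = algebraMap Λ F.carrier c := by rw [Algebra.smul_def, mul_one]
    have hy' : y ∈ I := hy
    have hcm : algebraMap Λ F.carrier c ∈ maximalIdeal F.carrier := by
      have : algebraMap Λ F.carrier c = (g x - x) - y := by rw [← hyz, hz1]; ring
      rw [this]
      exact sub_mem hgx (hIle hy')
    have hcI : algebraMap Λ F.carrier c ∈ I :=
      Ideal.mem_sup_right (Ideal.mem_map_of_mem _ (mem_max_of_map hcm))
    apply hxI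
    have hgxI : g x - x = y + algebraMap Λ F.carrier c := by rw [← hyz, hz1]
    rw [hgxI]
    exact add_mem hy' hcI
  have htor : Module.IsTorsionBySet Λ (F.carrier ⧸ J) ((maximalIdeal Λ : Ideal Λ) : Set Λ) := by
    rw [Module.isTorsionBySet_quotient_iff]
    intro a r hr
    obtain ⟨c, hc⟩ := F.resSurj a
    have hra : r • a = algebraMap Λ F.carrier (r * c) + algebraMap Λ F.carrier r * (a - algebraMap Λ F.carrier c) := by
      rw [Algebra.smul_def, map_mul]; ring
    rw [hra]
    refine add_mem (hconstJ _) (hIJ _ (Ideal.mem_sup_right ?_))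
    exact Ideal.mul_mem_right _ _ (Ideal.mem_map_of_mem _ hr)
  letI : Module (ResidueField Λ) (F.carrier ⧸ J) := htor.module
  set v0 : F.carrier ⧸ J := Submodule.Quotient.mk (g x - x) with hv0def
  have hv0 : v0 ≠ 0 := by
    rw [hv0def, Ne, Submodule.Quotient.mk_eq_zero]
    exact hxJ
  obtain ⟨φ, hφ⟩ :=
    LinearMap.exists_extend (LinearPMap.mkSpanSingleton (K := ResidueField Λ) v0 (1 : ResidueField Λ) hv0).toFun
  have hφ1 : φ v0 = 1 := by
    have h1 := LinearMap.congr_fun hφ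
      ⟨v0, Submodule.mem_span_singleton_self v0⟩
    exact h1.trans (LinearPMap.mkSpanSingleton_apply _ _ hv0 1)
  set ψ : F.carrier → ResidueField Λ := fun a => φ (Submodule.Quotient.mk a) with hψdef
  have ψ_add : ∀ a b : F.carrier, ψ (a + b) = ψ a + ψ b := by
    intro a b
    show φ (Submodule.Quotient.mk (a + b)) = _
    rw [Submodule.Quotient.mk_add, map_add]
  have ψ_sub : ∀ a b : F.carrier, ψ (a - b) = ψ a - ψ b := by
    intro a b
    show φ (Submodule.Quotient.mk (a - b)) = _
    rw [Submodule.Quotient.mk_sub, map_sub]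
  have ψ_J : ∀ a ∈ J, ψ a = 0 := by
    intro a ha
    show φ (Submodule.Quotient.mk a) = 0
    rw [(Submodule.Quotient.mk_eq_zero J).2 ha, map_zero]
  have ψ_const : ∀ c : Λ, ψ (algebraMap Λ F.carrier c) = 0 := fun c => ψ_J _ (hconstJ c)
  have ψ_smul : ∀ (c : Λ) (a : F.carrier),
      ψ (algebraMap Λ F.carrier c * a) = residue Λ c * ψ a := by
    intro c a
    have h1 : (Submodule.Quotient.mk (algebraMap Λ F.carrier c * a) : F.carrier ⧸ J)
        = residue Λ c • (Submodule.Quotient.mk a : F.carrier ⧸ J) := by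
      rw [← Algebra.smul_def, Submodule.Quotient.mk_smul]
      exact (htor.mk_smul c _).symm
    show φ (Submodule.Quotient.mk (algebraMap Λ F.carrier c * a)) = _
    rw [h1, map_smul, smul_eq_mul]
  have hconstE : ∀ c ∈ maximalIdeal Λ, algebraMap Λ E.carrier c = 0 := by
    intro c hc
    have h1 : algebraMap Λ E.carrier c ∈ Ideal.map (algebraMap Λ E.carrier) (maximalIdeal Λ) :=
      Ideal.mem_map_of_mem _ hc
    rwa [hmΛ, Ideal.mem_bot] at h1
  set μ : ResidueField Λ →+* E.carrier :=
    Ideal.Quotient.lift (maximalIdeal Λ) (algebraMap Λ E.carrier) hconstE with hμdef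
  have μ_mk : ∀ c : Λ, μ (residue Λ c) = algebraMap Λ E.carrier c := fun c =>
    Ideal.Quotient.lift_mk _ _ _
  have htm : t ∈ maximalIdeal E.carrier := htspan ▸ Ideal.mem_span_singleton_self t
  have ht2 : t * t = 0 := by
    have h1 : t * t ∈ maximalIdeal E.carrier ^ 2 := by
      rw [pow_two]; exact Ideal.mul_mem_mul htm htm
    rwa [hm2, Ideal.mem_bot] at h1
  set vt : F.carrier → E.carrier := fun a => algebraMap Λ E.carrier (F.resSurj a).choose + μ (ψ a) * t with hvt
  have WD : ∀ (a : F.carrier) (c : Λ), a - algebraMap Λ F.carrier c ∈ maximalIdeal F.carrier →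
      vt a = algebraMap Λ E.carrier c + μ (ψ a) * t := by
    intro a c hc
    have hc0 := (F.resSurj a).choose_spec
    have hdiff : algebraMap Λ F.carrier ((F.resSurj a).choose - c) ∈ maximalIdeal F.carrier := by
      rw [map_sub]
      have h2 : algebraMap Λ F.carrier (F.resSurj a).choose - algebraMap Λ F.carrier c
          = (a - algebraMap Λ F.carrier c) - (a - algebraMap Λ F.carrier (F.resSurj a).choose) := by ring
      rw [h2]; exact sub_mem hc hc0
    have h3 : algebraMap Λ E.carrier ((F.resSurj a).choose - c) = 0 :=
      hconstE _ (mem_max_of_map hdiff)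
    rw [map_sub, sub_eq_zero] at h3
    show algebraMap Λ E.carrier (F.resSurj a).choose + μ (ψ a) * t = _
    rw [h3]
  have hmap_add : ∀ a b : F.carrier, vt (a + b) = vt a + vt b := by
    intro a b
    obtain ⟨c, hc⟩ := F.resSurj a
    obtain ⟨d, hd⟩ := F.resSurj b
    have h1 : a + b - algebraMap Λ F.carrier (c + d) ∈ maximalIdeal F.carrier := by
      rw [map_add]
      have h2 : a + b - (algebraMap Λ F.carrier c + algebraMap Λ F.carrier d)
          = (a - algebraMap Λ F.carrier c) + (b - algebraMap Λ F.carrier d) := by ring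
      rw [h2]; exact add_mem hc hd
    rw [WD _ _ h1, WD _ _ hc, WD _ _ hd, map_add, ψ_add, map_add]
    ring
  have hmap_mul : ∀ a b : F.carrier, vt (a * b) = vt a * vt b := by
    intro a b
    obtain ⟨c, hc⟩ := F.resSurj a
    obtain ⟨d, hd⟩ := F.resSurj b
    have expand : a * b = algebraMap Λ F.carrier (c * d)
        + (algebraMap Λ F.carrier c * (b - algebraMap Λ F.carrier d)
          + algebraMap Λ F.carrier d * (a - algebraMap Λ F.carrier c)
          + (a - algebraMap Λ F.carrier c) * (b - algebraMap Λ F.carrier d)) := by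
      rw [map_mul]; ring
    have hmem : a * b - algebraMap Λ F.carrier (c * d) ∈ maximalIdeal F.carrier := by
      rw [expand, add_sub_cancel_left]
      exact add_mem (add_mem (Ideal.mul_mem_left _ _ hd) (Ideal.mul_mem_left _ _ hc))
        (Ideal.mul_mem_left _ _ hd)
    have hψab : ψ (a * b) = residue Λ c * ψ b + residue Λ d * ψ a := by
      have hW : ψ ((a - algebraMap Λ F.carrier c) * (b - algebraMap Λ F.carrier d)) = 0 := by
        refine ψ_J _ (hIJ _ (Ideal.mem_sup_left ?_))
        rw [pow_two]; exact Ideal.mul_mem_mul hc hd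
      have hn : ψ (b - algebraMap Λ F.carrier d) = ψ b := by rw [ψ_sub, ψ_const, sub_zero]
      have hm' : ψ (a - algebraMap Λ F.carrier c) = ψ a := by rw [ψ_sub, ψ_const, sub_zero]
      rw [expand, ψ_add, ψ_add, ψ_add, ψ_const, ψ_smul, ψ_smul, hW, hn, hm']
      ring
    rw [WD _ _ hmem, WD _ _ hc, WD _ _ hd, hψab]
    rw [← μ_mk c, ← μ_mk d, ← μ_mk (c * d), map_mul (residue Λ)]
    simp only [map_add, map_mul]
    linear_combination (-(μ (ψ a) * μ (ψ b))) * ht2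
  have hcommutes : ∀ c : Λ, vt (algebraMap Λ F.carrier c) = algebraMap Λ E.carrier c := by
    intro c
    rw [WD _ c (by rw [sub_self]; exact zero_mem _), ψ_const, map_zero, zero_mul, add_zero]
  have hmap_one : vt 1 = 1 := by
    have h := hcommutes 1; rwa [map_one, map_one] at h
  have hmap_zero : vt 0 = 0 := by
    have h := hcommutes 0; rwa [map_zero, map_zero] at h
  set v : F.carrier →ₐ[Λ] E.carrier :=
    { toFun := vt, map_one' := hmap_one, map_mul' := hmap_mul, map_zero' := hmap_zero,
      map_add' := hmap_add, commutes' := hcommutes } with hvdef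
  have hvtm : ∀ a : F.carrier, a ∈ maximalIdeal F.carrier → vt a ∈ maximalIdeal E.carrier := by
    intro a ham
    rw [WD a 0 (by rwa [map_zero, sub_zero]), map_zero, zero_add, htspan]
    exact Ideal.mem_span_singleton.2 ⟨μ (ψ a), mul_comm _ _⟩
  have hvloc : IsLocalHom v.toRingHom := by
    constructor
    intro a ha
    by_contra hu
    have ham : a ∈ maximalIdeal F.carrier := by rwa [mem_maximalIdeal, mem_nonunits_iff]
    have h2 := hvtm a ham
    rw [mem_maximalIdeal, mem_nonunits_iff] at h2
    exact h2 ha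
  have hne : v (g x) ≠ v x := by
    intro h
    have hsub : v (g x) - v x = t := by
      rw [← map_sub]
      show vt (g x - x) = t
      rw [WD _ 0 (by rwa [map_zero, sub_zero]), map_zero, zero_add]
      have hψ1 : ψ (g x - x) = 1 := by
        show φ (Submodule.Quotient.mk (g x - x)) = 1
        rw [← hv0def]; exact hφ1
      rw [hψ1, map_one, one_mul]
    rw [h, sub_self] at hsub
    exact ht0 hsub.symm
  exact ⟨⟨v, hvloc⟩, x, hne⟩

end NoHullAux
namespace NoHullAux2

open IsLocalRing NoHullAux

variable {Λ : Type u} [CommRing Λ] [IsLocalRing Λ]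

/-- Pairing two compatible maps into the fibre product. -/
theorem fibre_pair {F : ProRepAlg Λ} {K E E2 : ArtAlg Λ} {πE : ArtHom E K}
    {p1 p2 : ArtHom E2 E} (hFP : IsFibreProduct πE πE p1 p2)
    (u1 u2 : LocHom Λ F.carrier E.carrier)
    (h : ∀ a, πE.toAlgHom (u1.1 a) = πE.toAlgHom (u2.1 a)) :
    ∃ w : LocHom Λ F.carrier E2.carrier,
      (∀ a, p1.toAlgHom (w.1 a) = u1.1 a) ∧ (∀ a, p2.toAlgHom (w.1 a) = u2.1 a) := by
  classical
  have hex : ∀ a : F.carrier, ∃! r : E2.carrier,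
      p1.toAlgHom r = u1.1 a ∧ p2.toAlgHom r = u2.1 a := fun a => hFP.2 _ _ (h a)
  set wf : F.carrier → E2.carrier := fun a => (hex a).choose with hwf
  have hw1 : ∀ a, p1.toAlgHom (wf a) = u1.1 a := fun a => (hex a).choose_spec.1.1
  have hw2 : ∀ a, p2.toAlgHom (wf a) = u2.1 a := fun a => (hex a).choose_spec.1.2
  have hkey : ∀ (a : F.carrier) (r : E2.carrier),
      p1.toAlgHom r = u1.1 a → p2.toAlgHom r = u2.1 a → r = wf a := fun a r h1 h2 =>
    (hex a).choose_spec.2 r ⟨h1, h2⟩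
  have hone : wf 1 = 1 := (hkey 1 1 (by simp) (by simp)).symm
  have hzero : wf 0 = 0 := (hkey 0 0 (by simp) (by simp)).symm
  have hadd : ∀ a b, wf (a + b) = wf a + wf b := fun a b =>
    (hkey (a + b) (wf a + wf b)
      (by rw [map_add, hw1, hw1, ← map_add])
      (by rw [map_add, hw2, hw2, ← map_add])).symm
  have hmul : ∀ a b, wf (a * b) = wf a * wf b := fun a b =>
    (hkey (a * b) (wf a * wf b)
      (by rw [map_mul, hw1, hw1, ← map_mul])
      (by rw [map_mul, hw2, hw2, ← map_mul])).symm
  have hcomm : ∀ c : Λ, wf (algebraMap Λ F.carrier c) = algebraMap Λ E2.carrier c := fun c =>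
    (hkey _ _ (by rw [AlgHom.commutes, AlgHom.commutes])
      (by rw [AlgHom.commutes, AlgHom.commutes])).symm
  set w : F.carrier →ₐ[Λ] E2.carrier :=
    { toFun := wf, map_one' := hone, map_mul' := hmul, map_zero' := hzero,
      map_add' := hadd, commutes' := hcomm } with hwdef
  have hwloc : IsLocalHom w.toRingHom := by
    constructor
    intro a ha
    have h1 : IsUnit (p1.toAlgHom (wf a)) := ha.map p1.toAlgHom.toRingHom
    rw [hw1] at h1
    exact u1.2.1 a h1
  exact ⟨⟨w, hwloc⟩, hw1, hw2⟩

/-- Injectivity of `h_G(E2) → h_G(E) × h_G(E)` for the fibre product `E2`. -/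
theorem fibre_hinj {G : ProRepAlg Λ} {K E E2 : ArtAlg Λ} {πE : ArtHom E K}
    {p1 p2 : ArtHom E2 E} (hFP : IsFibreProduct πE πE p1 p2)
    (u u' : (hFunctor G).obj E2)
    (h1 : (hFunctor G).map p1 u = (hFunctor G).map p1 u')
    (h2 : (hFunctor G).map p2 u = (hFunctor G).map p2 u') : u = u' := by
  refine Subtype.ext (AlgHom.ext fun a => ?_)
  have e1 : p1.toAlgHom (u.1 a) = p1.toAlgHom (u'.1 a) := by
    have := congrArg (fun z => z.1 a) h1
    simpa [hFunctor] using this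
  have e2 : p2.toAlgHom (u.1 a) = p2.toAlgHom (u'.1 a) := by
    have := congrArg (fun z => z.1 a) h2
    simpa [hFunctor] using this
  have hu := hFP.2 (p1.toAlgHom (u.1 a)) (p2.toAlgHom (u.1 a)) (hFP.1 (u.1 a))
  exact hu.unique ⟨rfl, rfl⟩ ⟨e1.symm, e2.symm⟩

/-- Part 1: non-injectivity of the tangent pair map for the quotient functor. -/
theorem part1 {F : ProRepAlg Λ} {Γ : Subgroup (F.carrier ≃ₐ[Λ] F.carrier)}
    (hnt : ∃ g ∈ Γ, ¬ ActsTriviallyOnTangent F g) :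
    ∀ (K E E2 : ArtAlg Λ) (πE : ArtHom E K) (p1 p2 : ArtHom E2 E),
      maximalIdeal K.carrier = ⊥ → IsDualNumbers E → IsFibreProduct πE πE p1 p2 →
      ¬ Function.Injective (fun d : (quotFunctor F Γ).obj E2 =>
        ((quotFunctor F Γ).map p1 d, (quotFunctor F Γ).map p2 d)) := by
  intro K E E2 πE p1 p2 hK hE hFP hinj
  obtain ⟨g, hgΓ, hg⟩ := hnt
  obtain ⟨v, x, hvx⟩ := exists_tangent_vector F E hE g hg
  have hcompat : ∀ a, πE.toAlgHom (v.1 a) = πE.toAlgHom ((precompAut g v).1 a) := by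
    intro a
    have hsub : v.1 a - (precompAut g v).1 a ∈ maximalIdeal E.carrier := by
      obtain ⟨c, hc⟩ := F.resSurj a
      have heq : v.1 a - (precompAut g v).1 a
          = v.1 (a - algebraMap Λ F.carrier c)
            - (precompAut g v).1 (a - algebraMap Λ F.carrier c) := by
        show _ = v.1 (a - algebraMap Λ F.carrier c) - v.1 (g (a - algebraMap Λ F.carrier c))
        rw [map_sub, map_sub, map_sub, AlgHom.commutes, AlgEquiv.commutes]
        show _ = v.1 a - algebraMap Λ E.carrier c - (v.1 (g a) - v.1 (algebraMap Λ F.carrier c))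
        rw [AlgHom.commutes]
        show v.1 a - v.1 (g a) = _
        ring
      rw [heq]
      exact sub_mem (locHom_maps_max v hc) (locHom_maps_max (precompAut g v) hc)
    have h0 : πE.toAlgHom (v.1 a - (precompAut g v).1 a) = 0 := by
      have hmem : πE.toAlgHom (v.1 a - (precompAut g v).1 a) ∈ maximalIdeal K.carrier :=
        locHom_maps_max (⟨πE.toAlgHom, πE.isLocal⟩ : LocHom Λ E.carrier K.carrier) hsub
      rwa [hK, Ideal.mem_bot] at hmem
    rw [map_sub, sub_eq_zero] at h0
    exact h0
  obtain ⟨w, hw1, hw2⟩ := fibre_pair hFP v (precompAut g v) hcompat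
  obtain ⟨wd, hwd1, hwd2⟩ := fibre_pair hFP v v (fun a => rfl)
  have heqpair : ((quotFunctor F Γ).map p1 ⟦wd⟧, (quotFunctor F Γ).map p2 ⟦wd⟧)
      = ((quotFunctor F Γ).map p1 ⟦w⟧, (quotFunctor F Γ).map p2 ⟦w⟧) := by
    have c1 : (hFunctor F).map p1 wd = (hFunctor F).map p1 w :=
      Subtype.ext (AlgHom.ext fun a => (hwd1 a).trans (hw1 a).symm)
    have c2l : (hFunctor F).map p2 wd = v :=
      Subtype.ext (AlgHom.ext fun a => hwd2 a)
    have c2r : (hFunctor F).map p2 w = precompAut g v :=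
      Subtype.ext (AlgHom.ext fun a => hw2 a)
    refine Prod.ext ?_ ?_
    · show Quotient.mk _ ((hFunctor F).map p1 wd) = Quotient.mk _ ((hFunctor F).map p1 w)
      rw [c1]
    · show Quotient.mk _ ((hFunctor F).map p2 wd) = Quotient.mk _ ((hFunctor F).map p2 w)
      rw [c2l, c2r]
      exact Quotient.sound ⟨g, hgΓ, rfl⟩
  have := hinj heqpair
  obtain ⟨h, hhΓ, hpre⟩ := Quotient.exact this
  have hpt : ∀ a, wd.1 (h a) = w.1 a := fun a =>
    congrArg (fun z => z.1 a) hpre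
  have e1 : ∀ a, v.1 (h a) = v.1 a := by
    intro a
    have := congrArg p1.toAlgHom (hpt a)
    rwa [hwd1, hw1] at this
  have e2 : ∀ a, v.1 (h a) = v.1 (g a) := by
    intro a
    have := congrArg p2.toAlgHom (hpt a)
    rwa [hwd2, hw2] at this
  exact hvx ((e2 x).symm.trans (e1 x))

end NoHullAux2
namespace NoHullConc
set_option maxHeartbeats 1000000

open IsLocalRing TrivSqZeroExt

variable (Λ : Type u) [CommRing Λ] [IsLocalRing Λ]

instance isLocalHom_resmap : IsLocalHom (algebraMap Λ (ResidueField Λ)) := by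
  constructor
  intro a ha
  rw [show algebraMap Λ (ResidueField Λ) a = residue Λ a from rfl] at ha
  by_contra hu
  rw [← residue_ne_zero_iff_isUnit, not_not] at hu
  rw [hu] at ha
  exact not_isUnit_zero ha

/-- The residue field as an object of `Art`. -/
noncomputable def KArt : ArtAlg Λ where
  carrier := ResidueField Λ
  resSurj a := by
    obtain ⟨c, hc⟩ := Ideal.Quotient.mk_surjective a
    exact ⟨c, by
      rw [show algebraMap Λ (ResidueField Λ) c = Ideal.Quotient.mk _ c from rfl, hc, sub_self]
      exact zero_mem _⟩

variable {M : Type u} [AddCommGroup M] [Module (ResidueField Λ) M]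
  [Module (ResidueField Λ)ᵐᵒᵖ M] [IsCentralScalar (ResidueField Λ) M]
  [Module Λ M] [IsScalarTower Λ (ResidueField Λ) M] [IsScalarTower Λ (ResidueField Λ)ᵐᵒᵖ M]

theorem tsze_isUnit_iff (x : TrivSqZeroExt (ResidueField Λ) M) :
    IsUnit x ↔ fst x ≠ 0 := by
  rw [isUnit_iff_isUnit_fst, isUnit_iff_ne_zero]

instance tsze_isLocalRing : IsLocalRing (TrivSqZeroExt (ResidueField Λ) M) := by
  refine IsLocalRing.of_isUnit_or_isUnit_one_sub_self fun a => ?_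
  rw [tsze_isUnit_iff, tsze_isUnit_iff]
  by_cases h : fst a = 0
  · right; rw [fst_sub, fst_one, h, sub_zero]; exact one_ne_zero
  · left; exact h

theorem tsze_mem_max (x : TrivSqZeroExt (ResidueField Λ) M) :
    x ∈ maximalIdeal (TrivSqZeroExt (ResidueField Λ) M) ↔ fst x = 0 := by
  rw [mem_maximalIdeal, mem_nonunits_iff, tsze_isUnit_iff, not_not]

theorem tsze_eq_inr {x : TrivSqZeroExt (ResidueField Λ) M} (hx : fst x = 0) :
    x = inr (snd x) :=
  TrivSqZeroExt.ext (by rw [fst_inr, hx]) (by rw [snd_inr])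

instance tsze_finite [Module.Finite (ResidueField Λ) M] :
    Module.Finite (ResidueField Λ) (TrivSqZeroExt (ResidueField Λ) M) := by
  refine Module.Finite.of_surjective (R := ResidueField Λ) (σ := RingHom.id (ResidueField Λ)) (M := (ResidueField Λ) × M)
    ⟨⟨fun p => inl p.1 + inr p.2, fun p q => ?_⟩, fun s p => ?_⟩ fun x => ?_
  · show inl (p.1 + q.1) + inr (p.2 + q.2) = _
    rw [inl_add, inr_add]; abel
  · show inl (s • p.1) + inr (s • p.2) = s • (inl p.1 + inr p.2)
    rw [inl_smul, inr_smul, smul_add]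
  · exact ⟨(fst x, snd x), inl_fst_add_inr_snd_eq x⟩

instance tsze_isArtinianRing [Module.Finite (ResidueField Λ) M] :
    IsArtinianRing (TrivSqZeroExt (ResidueField Λ) M) :=
  IsArtinianRing.of_finite (ResidueField Λ) _

instance tsze_isLocalHom :
    IsLocalHom (algebraMap Λ (TrivSqZeroExt (ResidueField Λ) M)) := by
  constructor
  intro c h
  rw [algebraMap_eq_inl', isUnit_iff_isUnit_fst, fst_inl] at h
  exact (isLocalHom_resmap Λ).1 c h

theorem tsze_max_sq : maximalIdeal (TrivSqZeroExt (ResidueField Λ) M) ^ 2 = ⊥ := by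
  rw [pow_two]
  refine le_bot_iff.1 (Ideal.mul_le.2 fun r hr s hs => ?_)
  rw [tsze_mem_max] at hr hs
  rw [Ideal.mem_bot, tsze_eq_inr Λ hr, tsze_eq_inr Λ hs, inr_mul_inr]

theorem tsze_mapΛ :
    Ideal.map (algebraMap Λ (TrivSqZeroExt (ResidueField Λ) M)) (maximalIdeal Λ) = ⊥ := by
  refine le_bot_iff.1 (Ideal.map_le_iff_le_comap.2 fun c hc => ?_)
  rw [Ideal.mem_comap, Ideal.mem_bot, algebraMap_eq_inl',
    show algebraMap Λ (ResidueField Λ) c = Ideal.Quotient.mk _ c from rfl,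
    Ideal.Quotient.eq_zero_iff_mem.2 hc]
  exact inl_zero M

theorem tsze_resSurj (a : TrivSqZeroExt (ResidueField Λ) M) :
    ∃ c : Λ, a - algebraMap Λ _ c ∈ maximalIdeal (TrivSqZeroExt (ResidueField Λ) M) := by
  obtain ⟨c, hc⟩ := Ideal.Quotient.mk_surjective (fst a)
  refine ⟨c, ?_⟩
  rw [tsze_mem_max, fst_sub, algebraMap_eq_inl', fst_inl,
    show algebraMap Λ (ResidueField Λ) c = Ideal.Quotient.mk _ c from rfl, hc]
  exact sub_self _

/-- The dual numbers `k[ε]` as an object of `Art`. -/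
noncomputable def EArt : ArtAlg Λ where
  carrier := TrivSqZeroExt (ResidueField Λ) (ResidueField Λ)
  resSurj := tsze_resSurj Λ

/-- `k[ε₁, ε₂]` as an object of `Art`. -/
noncomputable def E2Art : ArtAlg Λ where
  carrier := TrivSqZeroExt (ResidueField Λ) (ResidueField Λ × ResidueField Λ)
  resSurj := tsze_resSurj Λ

theorem isKV_E : IsKV (EArt Λ) := ⟨tsze_max_sq Λ, tsze_mapΛ Λ⟩

theorem isKV_E2 : IsKV (E2Art Λ) := ⟨tsze_max_sq Λ, tsze_mapΛ Λ⟩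

theorem isDualNumbers_E : IsDualNumbers (EArt Λ) := by
  refine ⟨isKV_E Λ, inr 1, ?_, ?_⟩
  · intro h
    have h2 := congrArg snd h
    rw [snd_inr] at h2
    exact one_ne_zero (h2.trans snd_zero)
  · refine Ideal.ext fun (x : TrivSqZeroExt (ResidueField Λ) (ResidueField Λ)) => ?_
    show x ∈ maximalIdeal (TrivSqZeroExt (ResidueField Λ) (ResidueField Λ)) ↔
      x ∈ (Ideal.span {inr 1} : Ideal (TrivSqZeroExt (ResidueField Λ) (ResidueField Λ)))
    rw [tsze_mem_max, Ideal.mem_span_singleton]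
    constructor
    · intro hx
      refine ⟨inl (snd x), ?_⟩
      rw [mul_comm, inl_mul_inr, smul_eq_mul, mul_one]
      exact tsze_eq_inr Λ hx
    · rintro ⟨c, rfl⟩
      rw [fst_mul, fst_inr, zero_mul]

theorem maxK_bot : maximalIdeal (KArt Λ).carrier = ⊥ := by
  have h : maximalIdeal (ResidueField Λ) = ⊥ := IsLocalRing.maximalIdeal_eq_bot
  exact h

/-- The projection `k[ε] → k`. -/
noncomputable def piE : ArtHom (EArt Λ) (KArt Λ) :=
  ⟨TrivSqZeroExt.fstHom Λ (ResidueField Λ) (ResidueField Λ),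
    ⟨fun a ha => isUnit_iff_isUnit_fst.2 ha⟩⟩

/-- First projection `k[ε₁,ε₂] → k[ε]`. -/
noncomputable def p1c : ArtHom (E2Art Λ) (EArt Λ) :=
  ⟨(TrivSqZeroExt.map (LinearMap.fst (ResidueField Λ) (ResidueField Λ)
      (ResidueField Λ))).restrictScalars Λ,
    ⟨fun (a : TrivSqZeroExt (ResidueField Λ) (ResidueField Λ × ResidueField Λ)) ha => by
      have ha' : IsUnit (TrivSqZeroExt.map (LinearMap.fst (ResidueField Λ) (ResidueField Λ)
        (ResidueField Λ)) a) := ha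
      rw [isUnit_iff_isUnit_fst, fst_map] at ha'
      exact isUnit_iff_isUnit_fst.2 ha'⟩⟩

/-- Second projection `k[ε₁,ε₂] → k[ε]`. -/
noncomputable def p2c : ArtHom (E2Art Λ) (EArt Λ) :=
  ⟨(TrivSqZeroExt.map (LinearMap.snd (ResidueField Λ) (ResidueField Λ)
      (ResidueField Λ))).restrictScalars Λ,
    ⟨fun (a : TrivSqZeroExt (ResidueField Λ) (ResidueField Λ × ResidueField Λ)) ha => by
      have ha' : IsUnit (TrivSqZeroExt.map (LinearMap.snd (ResidueField Λ) (ResidueField Λ)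
        (ResidueField Λ)) a) := ha
      rw [isUnit_iff_isUnit_fst, fst_map] at ha'
      exact isUnit_iff_isUnit_fst.2 ha'⟩⟩

theorem isFibreProduct_conc : IsFibreProduct (piE Λ) (piE Λ) (p1c Λ) (p2c Λ) := by
  constructor
  · rintro (r : TrivSqZeroExt (ResidueField Λ) (ResidueField Λ × ResidueField Λ))
    show fst (TrivSqZeroExt.map _ r) = fst (TrivSqZeroExt.map _ r)
    rw [fst_map, fst_map]
  · rintro (a : TrivSqZeroExt (ResidueField Λ) (ResidueField Λ)) (c : TrivSqZeroExt (ResidueField Λ) (ResidueField Λ)) h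
    have h' : fst a = fst c := h
    refine ⟨inl (fst a) + inr (snd a, snd c), ⟨?_, ?_⟩, ?_⟩
    · show TrivSqZeroExt.map _ (inl (fst a) + inr (snd a, snd c)) = a
      rw [map_add, map_inl, map_inr]
      show inl (fst a) + inr (snd a) = a
      exact inl_fst_add_inr_snd_eq a
    · show TrivSqZeroExt.map _ (inl (fst a) + inr (snd a, snd c)) = c
      rw [map_add, map_inl, map_inr]
      show inl (fst a) + inr (snd c) = c
      rw [h']
      exact inl_fst_add_inr_snd_eq c
    · rintro (y : TrivSqZeroExt (ResidueField Λ) (ResidueField Λ × ResidueField Λ)) ⟨hy1, hy2⟩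
      have hy1' : TrivSqZeroExt.map (LinearMap.fst (ResidueField Λ) (ResidueField Λ)
        (ResidueField Λ)) y = a := hy1
      have hy2' : TrivSqZeroExt.map (LinearMap.snd (ResidueField Λ) (ResidueField Λ)
        (ResidueField Λ)) y = c := hy2
      show y = (inl (fst a) + inr (snd a, snd c) : TrivSqZeroExt (ResidueField Λ) (ResidueField Λ × ResidueField Λ))
      refine TrivSqZeroExt.ext ?_ ?_
      · rw [fst_add, fst_inl, fst_inr, add_zero, ← hy1', fst_map]
      · rw [snd_add, snd_inl, snd_inr, zero_add]
        refine Prod.ext ?_ ?_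
        · rw [← hy1', snd_map]; rfl
        · rw [← hy2', snd_map]; rfl

end NoHullConc

/-- If `Γ` acts nontrivially on the tangent space `TF`, then
`𝓓 = 𝓕/Γ` fails to have a tangent space: `𝓓(k[ε₁,ε₂]) → 𝓓(k[ε]) × 𝓓(k[ε])`
(where `k[ε₁,ε₂] = k[ε] ×_k k[ε]`) is not injective; in particular `𝓓` has no hull. -/
theorem no_hull_of_nontrivial_tangent_action {Λ : Type u} [CommRing Λ] [IsLocalRing Λ] [IsNoetherianRing Λ]
    [IsAdicComplete (maximalIdeal Λ) Λ]
    (F : ProRepAlg Λ) (Γ : Subgroup (F.carrier ≃ₐ[Λ] F.carrier))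
    (hnt : ∃ g ∈ Γ, ¬ ActsTriviallyOnTangent F g) :
    (∀ (K E E2 : ArtAlg Λ) (πE : ArtHom E K) (p1 p2 : ArtHom E2 E),
        maximalIdeal K.carrier = ⊥ → IsDualNumbers E → IsFibreProduct πE πE p1 p2 →
        ¬ Function.Injective (fun d : (quotFunctor F Γ).obj E2 =>
          ((quotFunctor F Γ).map p1 d, (quotFunctor F Γ).map p2 d))) ∧
      ¬ HasHull (quotFunctor F Γ) := by
  refine ⟨NoHullAux2.part1 hnt, ?_⟩
  rintro ⟨G, α, hsm, hbij⟩
  refine NoHullAux2.part1 hnt (NoHullConc.KArt Λ) (NoHullConc.EArt Λ) (NoHullConc.E2Art Λ)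
    (NoHullConc.piE Λ) (NoHullConc.p1c Λ) (NoHullConc.p2c Λ) (NoHullConc.maxK_bot Λ)
    (NoHullConc.isDualNumbers_E Λ) (NoHullConc.isFibreProduct_conc Λ) ?_
  intro d d' hdd
  obtain ⟨u, rfl⟩ := (hbij (NoHullConc.E2Art Λ) (NoHullConc.isKV_E2 Λ)).2 d
  obtain ⟨u', rfl⟩ := (hbij (NoHullConc.E2Art Λ) (NoHullConc.isKV_E2 Λ)).2 d'
  have key1 : (quotFunctor F Γ).map (NoHullConc.p1c Λ) (α.app _ u)
      = (quotFunctor F Γ).map (NoHullConc.p1c Λ) (α.app _ u') := congrArg Prod.fst hdd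
  have key2 : (quotFunctor F Γ).map (NoHullConc.p2c Λ) (α.app _ u)
      = (quotFunctor F Γ).map (NoHullConc.p2c Λ) (α.app _ u') := congrArg Prod.snd hdd
  rw [← α.naturality, ← α.naturality] at key1 key2
  have h1 := (hbij (NoHullConc.EArt Λ) (NoHullConc.isKV_E Λ)).1 key1
  have h2 := (hbij (NoHullConc.EArt Λ) (NoHullConc.isKV_E Λ)).1 key2
  rw [NoHullAux2.fibre_hinj (NoHullConc.isFibreProduct_conc Λ) u u' h1 h2]
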